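/- Let 𝐝 = (a_{11}, …, a_{1s_1}, a_{21}, …, a_{2s_2}, …, a_{r1}, …, a_{rs_r}; n) be a dimension vector whose entries are partitioned into r nonempty groups, such that Σ_{j=1}^{s_i} a_{ij} ≤ n for every 1 ≤ i ≤ r. If the dimension vector (Σ_{j=1}^{s_1} a_{1j}, …, Σ_{j=1}^{s_r} a_{rj}; n) is sparse, then 𝐝 is sparse. -/

import Mathlib

noncomputable section

/-- Complex `n × d` matrices of rank `d`, with the subspace topology of the
Euclidean (product) topology on matrices. -/
def FullRankMatrices (n d : ℕ) : Type :=
  {A : Matrix (Fin n) (Fin d) ℂ // A.rank = d}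

instance (n d : ℕ) : TopologicalSpace (FullRankMatrices n d) :=
  instTopologicalSpaceSubtype

/-- The Grassmannian `Gr(d; n)` of `d`-dimensional linear subspaces of `ℂ^n`. -/
def Gr (d n : ℕ) : Type :=
  {U : Submodule ℂ (Fin n → ℂ) // Module.finrank ℂ U = d}

/-- The map sending a rank-`d` matrix to its column span. -/
def colSpan (n d : ℕ) : FullRankMatrices n d → Gr d n :=
  fun A => ⟨LinearMap.range A.1.mulVecLin, A.2⟩

/-- `Gr(d; n)` carries the quotient topology induced by the column-span map. -/
instance (d n : ℕ) : TopologicalSpace (Gr d n) :=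
  TopologicalSpace.coinduced (colSpan n d) inferInstance

/-- The linear automorphism of `ℂ^n` associated to an element of `GL(n, ℂ)`. -/
def glEquiv {n : ℕ} (M : GL (Fin n) ℂ) : (Fin n → ℂ) ≃ₗ[ℂ] (Fin n → ℂ) :=
  LinearMap.GeneralLinearGroup.generalLinearEquiv ℂ (Fin n → ℂ)
    (Matrix.GeneralLinearGroup.toLin M)

/-- The action of `GL(n, ℂ)` on the Grassmannian, `M • U = M(U)`. -/
def glAction {n d : ℕ} (M : GL (Fin n) ℂ) (U : Gr d n) : Gr d n :=
  ⟨U.1.map (glEquiv M).toLinearMap, by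
    rw [LinearEquiv.finrank_map_eq]; exact U.2⟩

/-- A dimension vector, recorded as the list `[d_1, …, d_k]` of subspace dimensions
together with the ambient dimension `n`, is dense if some point of
`∏ᵢ Gr(dᵢ; n)` has dense orbit under the diagonal `GL(n, ℂ)`-action. -/
def DenseDV (d : List ℕ) (n : ℕ) : Prop :=
  ∃ x : ∀ i : Fin d.length, Gr (d.get i) n,
    Dense {y : ∀ i : Fin d.length, Gr (d.get i) n |
      ∃ M : GL (Fin n) ℂ, (fun i => glAction M (x i)) = y}

end


/- ### Auxiliary development ### -/

open Module Matrix Submodule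
open scoped ComplexOrder

noncomputable section Aux

variable {n d m : ℕ}

lemma rank_eq_iff_inj (A : Matrix (Fin n) (Fin d) ℂ) :
    A.rank = d ↔ Function.Injective A.mulVecLin := by
  rw [← LinearMap.ker_eq_bot]
  have h2 := LinearMap.finrank_range_add_finrank_ker A.mulVecLin
  simp only [Module.finrank_pi, Fintype.card_fin] at h2
  rw [Matrix.rank]
  constructor
  · intro h
    exact Submodule.finrank_eq_zero.mp (by omega)
  · intro h
    rw [h, finrank_bot] at h2
    omega

lemma rank_sq_eq_iff_det (B : Matrix (Fin d) (Fin d) ℂ) :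
    B.rank = d ↔ B.det ≠ 0 := by
  rw [rank_eq_iff_inj, ← LinearMap.ker_eq_bot]
  constructor
  · intro h hdet
    obtain ⟨v, hv, hmv⟩ := Matrix.exists_mulVec_eq_zero_iff.mpr hdet
    apply hv
    have hk : v ∈ LinearMap.ker B.mulVecLin := by
      simp only [LinearMap.mem_ker, Matrix.mulVecLin_apply]
      exact hmv
    rw [h] at hk
    simpa using hk
  · intro h
    rw [Submodule.eq_bot_iff]
    intro v hv
    by_contra hne
    exact h (Matrix.exists_mulVec_eq_zero_iff.mp
      ⟨v, hne, by simpa [Matrix.mulVecLin_apply] using hv⟩)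

lemma rank_full_iff_det (A : Matrix (Fin n) (Fin d) ℂ) :
    A.rank = d ↔ (Aᴴ * A).det ≠ 0 := by
  rw [← rank_sq_eq_iff_det, Matrix.rank_conjTranspose_mul_self]

lemma isOpen_fullRank : IsOpen {A : Matrix (Fin n) (Fin d) ℂ | A.rank = d} := by
  have : {A : Matrix (Fin n) (Fin d) ℂ | A.rank = d}
      = (fun A : Matrix (Fin n) (Fin d) ℂ => (Aᴴ * A).det) ⁻¹' {0}ᶜ := by
    ext A
    simp [rank_full_iff_det]
  rw [this]
  exact (isOpen_compl_singleton).preimage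
    ((continuous_id.matrix_conjTranspose.matrix_mul continuous_id).matrix_det)

-- rank full iff columns linearly independent
lemma rank_eq_iff_li (A : Matrix (Fin n) (Fin d) ℂ) :
    A.rank = d ↔ LinearIndependent ℂ (fun k => Aᵀ k) := by
  rw [linearIndependent_iff_card_eq_finrank_span, Matrix.rank_eq_finrank_span_cols,
    Fintype.card_fin, Set.finrank]
  exact eq_comm


lemma exists_colSpan_eq (u : Gr d n) : ∃ A : FullRankMatrices n d, colSpan n d A = u := by
  obtain ⟨U, hU⟩ := u
  let b : Basis (Fin d) ℂ U := (Module.finBasis ℂ U).reindex (finCongr (by rw [hU]))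
  let A : Matrix (Fin n) (Fin d) ℂ := Matrix.of fun x k => ((b k : U) : Fin n → ℂ) x
  have hrange : LinearMap.range A.mulVecLin = U := by
    rw [Matrix.range_mulVecLin]
    have : Set.range A.col = U.subtype '' Set.range b := by
      rw [← Set.range_comp]
      rfl
    rw [this, ← Submodule.map_span, b.span_eq, Submodule.map_subtype_top]
  have hrank : A.rank = d := by
    rw [Matrix.rank, hrange, hU]
  exact ⟨⟨A, hrank⟩, Subtype.ext hrange⟩

lemma mulVec_col (B : Matrix (Fin n) (Fin d) ℂ) (k : Fin d) (x : Fin n) :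
    B.mulVec (Pi.single k 1) x = B x k := by
  simp [Matrix.mulVec_single]

lemma exists_unit_mul {A B : FullRankMatrices n d}
    (h : LinearMap.range B.1.mulVecLin = LinearMap.range A.1.mulVecLin) :
    ∃ g : Matrix (Fin d) (Fin d) ℂ, g.det ≠ 0 ∧ B.1 = A.1 * g := by
  have hmem : ∀ k : Fin d, B.1.mulVec (Pi.single k 1) ∈ LinearMap.range A.1.mulVecLin := by
    intro k
    rw [← h]
    exact ⟨Pi.single k 1, by simp [Matrix.mulVecLin_apply]⟩
  choose v hv using hmem
  set g : Matrix (Fin d) (Fin d) ℂ := Matrix.of fun j k => v k j with hg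
  have hBg : B.1 = A.1 * g := by
    ext x k
    have := congrFun (hv k) x
    simp only [Matrix.mulVecLin_apply] at this
    rw [mulVec_col] at this
    rw [← this]
    simp [hg, Matrix.mul_apply, Matrix.mulVec, dotProduct, mul_comm]
  refine ⟨g, ?_, hBg⟩
  have hinj : Function.Injective B.1.mulVecLin := (rank_eq_iff_inj _).mp B.2
  rw [hBg, Matrix.mulVecLin_mul] at hinj
  rw [LinearMap.coe_comp] at hinj
  exact (rank_sq_eq_iff_det g).mp ((rank_eq_iff_inj g).mpr
    (Function.Injective.of_comp hinj))

lemma range_mul_of_det_ne (A : Matrix (Fin n) (Fin d) ℂ) (g : Matrix (Fin d) (Fin d) ℂ)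
    (hg : g.det ≠ 0) : LinearMap.range (A * g).mulVecLin = LinearMap.range A.mulVecLin := by
  rw [Matrix.mulVecLin_mul]
  apply LinearMap.range_comp_of_range_eq_top
  rw [LinearMap.range_eq_top]
  exact (LinearMap.injective_iff_surjective).mp ((rank_eq_iff_inj g).mp
    ((rank_sq_eq_iff_det g).mpr hg))

lemma rank_mul_of_det_ne (A : FullRankMatrices n d) (g : Matrix (Fin d) (Fin d) ℂ)
    (hg : g.det ≠ 0) : (A.1 * g).rank = d := by
  rw [Matrix.rank, range_mul_of_det_ne _ _ hg, ← Matrix.rank, A.2]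

lemma continuous_colSpan : Continuous (colSpan n d) := continuous_coinduced_rng

lemma isOpenMap_colSpan : IsOpenMap (colSpan n d) := by
  intro O hO
  rw [isOpen_coinduced]
  have : colSpan n d ⁻¹' (colSpan n d '' O) =
      ⋃ g : {g : Matrix (Fin d) (Fin d) ℂ // g.det ≠ 0},
        (fun B : FullRankMatrices n d =>
          (⟨B.1 * g.1, rank_mul_of_det_ne B g.1 g.2⟩ : FullRankMatrices n d)) ⁻¹' O := by
    ext B
    simp only [Set.mem_preimage, Set.mem_image, Set.mem_iUnion]
    constructor
    · rintro ⟨A, hA, hcs⟩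
      have hr : LinearMap.range B.1.mulVecLin = LinearMap.range A.1.mulVecLin := by
        have := congrArg Subtype.val hcs
        simpa [colSpan] using this.symm
      obtain ⟨g, hgdet, hBg⟩ := exists_unit_mul hr
      have hu : IsUnit g.det := isUnit_iff_ne_zero.mpr hgdet
      have hdetinv : g⁻¹.det ≠ 0 := by
        rw [Matrix.det_nonsing_inv]
        simpa [Ring.inverse_eq_inv'] using hgdet
      refine ⟨⟨g⁻¹, hdetinv⟩, ?_⟩
      have : B.1 * g⁻¹ = A.1 := by
        rw [hBg, Matrix.mul_nonsing_inv_cancel_right _ _ hu]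
      show (⟨B.1 * g⁻¹, _⟩ : FullRankMatrices n d) ∈ O
      refine (congrArg (fun z => z ∈ O) ?_).mpr hA
      exact Subtype.ext this
    · rintro ⟨g, hgO⟩
      refine ⟨_, hgO, ?_⟩
      apply Subtype.ext
      simp only [colSpan]
      exact range_mul_of_det_ne B.1 g.1 g.2
  rw [this]
  apply isOpen_iUnion
  intro g
  exact hO.preimage ((continuous_subtype_val.matrix_mul continuous_const).subtype_mk _)

lemma surjective_colSpan : Function.Surjective (colSpan n d) := fun u =>
  exists_colSpan_eq u

lemma isOpenQuotientMap_colSpan : IsOpenQuotientMap (colSpan n d) :=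
  ⟨surjective_colSpan, continuous_colSpan, isOpenMap_colSpan⟩

section Concat

variable {b : Fin m → ℕ} (σ : Fin (∑ j, b j) ≃ Σ j, Fin (b j))

def concatM (A : ∀ j, Matrix (Fin n) (Fin (b j)) ℂ) : Matrix (Fin n) (Fin (∑ j, b j)) ℂ :=
  Matrix.of fun x k => A (σ k).1 x (σ k).2

lemma range_concatM (A : ∀ j, Matrix (Fin n) (Fin (b j)) ℂ) :
    LinearMap.range (concatM σ A).mulVecLin = ⨆ j, LinearMap.range (A j).mulVecLin := by
  simp only [Matrix.range_mulVecLin]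
  have h1 : Set.range (concatM σ A).col
      = Set.range (fun p : Σ j, Fin (b j) => (A p.1).col p.2) := by
    rw [← σ.surjective.range_comp (g := fun p : Σ j, Fin (b j) => (A p.1).col p.2)]
    rfl
  rw [h1, Set.range_sigma_eq_iUnion_range, Submodule.span_iUnion]

lemma rank_concatM (A : ∀ j, Matrix (Fin n) (Fin (b j)) ℂ) :
    (concatM σ A).rank = Module.finrank ℂ ↥(⨆ j, LinearMap.range (A j).mulVecLin) := by
  rw [Matrix.rank, range_concatM]

def blockM (C : Matrix (Fin n) (Fin (∑ j, b j)) ℂ) (j : Fin m) :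
    Matrix (Fin n) (Fin (b j)) ℂ :=
  Matrix.of fun x jj => C x (σ.symm ⟨j, jj⟩)

lemma concat_blockM (C : Matrix (Fin n) (Fin (∑ j, b j)) ℂ) :
    concatM σ (blockM σ C) = C := by
  ext x k
  simp only [concatM, blockM, Matrix.of_apply]
  rw [Sigma.eta, Equiv.symm_apply_apply]

lemma rank_blockM {C : Matrix (Fin n) (Fin (∑ j, b j)) ℂ} (hC : C.rank = ∑ j, b j)
    (j : Fin m) : (blockM σ C j).rank = b j := by
  rw [rank_eq_iff_li] at hC ⊢
  have : (fun jj => (blockM σ C j)ᵀ jj)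
      = (fun k => Cᵀ k) ∘ (fun jj : Fin (b j) => σ.symm ⟨j, jj⟩) := rfl
  rw [this]
  exact hC.comp _ (fun jj jj' h => by
    have := σ.symm.injective h
    simpa using this)

end Concat

lemma nonempty_Gr (h : d ≤ n) : Nonempty (Gr d n) := by
  have hli : LinearIndependent ℂ fun k : Fin d => (Pi.single (Fin.castLE h k) (1 : ℂ) : Fin n → ℂ) := by
    have hb := (Pi.basisFun ℂ (Fin n)).linearIndependent
    have : (fun k : Fin d => (Pi.single (Fin.castLE h k) (1 : ℂ) : Fin n → ℂ))
        = (Pi.basisFun ℂ (Fin n)) ∘ (Fin.castLE h) := by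
      funext k
      simp [Pi.basisFun_apply]
    rw [this]
    exact hb.comp _ (Fin.castLE_injective h)
  exact ⟨⟨Submodule.span ℂ (Set.range _), by
    rw [finrank_span_eq_card hli, Fintype.card_fin]⟩⟩

def DD {ι : Type} (f : ι → ℕ) (n : ℕ) : Prop :=
  ∃ x : ∀ i, Gr (f i) n,
    Dense {y : ∀ i, Gr (f i) n | ∃ M : GL (Fin n) ℂ, (fun i => glAction M (x i)) = y}

section Main

variable {r : ℕ} {s : Fin r → ℕ}

theorem DD_grouped (a : ∀ i : Fin r, Fin (s i) → ℕ)
    (hgroup : ∀ i, ∑ j, a i j ≤ n)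
    (h : DD (fun p : Σ i : Fin r, Fin (s i) => a p.1 p.2) n) :
    DD (fun i => ∑ j, a i j) n := by
  classical
  obtain ⟨x, hx⟩ := h
  set c : Fin r → ℕ := fun i => ∑ j, a i j with hc
  let σ : ∀ i, Fin (∑ j, a i j) ≃ Σ j, Fin (a i j) := fun i =>
    (Fintype.equivFinOfCardEq (by simp)).symm
  -- the concatenation of a tuple of full-rank matrices, groupwise
  let conc : (∀ p : Σ i, Fin (s i), FullRankMatrices n (a p.1 p.2)) → ∀ i : Fin r,
      Matrix (Fin n) (Fin (c i)) ℂ := fun B i => concatM (σ i) (fun j => (B ⟨i, j⟩).1)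
  have hconc_cont : ∀ i, Continuous fun B : ∀ p : Σ i, Fin (s i),
      FullRankMatrices n (a p.1 p.2) => conc B i := by
    intro i
    apply continuous_matrix
    intro x k
    have h1 : Continuous fun B : ∀ p : Σ i, Fin (s i), FullRankMatrices n (a p.1 p.2) =>
        B ⟨i, ((σ i) k).1⟩ := continuous_apply _
    have h2 := continuous_subtype_val.comp h1
    have h3 : Continuous fun B : ∀ p : Σ i, Fin (s i), FullRankMatrices n (a p.1 p.2) =>
        (B ⟨i, ((σ i) k).1⟩).1 x := (continuous_apply x).comp h2
    exact (continuous_apply (((σ i) k).2)).comp h3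
  have hp : IsOpenQuotientMap (Pi.map fun p : Σ i, Fin (s i) => colSpan n (a p.1 p.2)) :=
    .piMap fun _ => isOpenQuotientMap_colSpan
  have hq : IsOpenQuotientMap (Pi.map fun i : Fin r => colSpan n (c i)) :=
    .piMap fun _ => isOpenQuotientMap_colSpan
  -- key: image under the quotient map has supremum computed by concatenation
  have hkey : ∀ (B : ∀ p : Σ i, Fin (s i), FullRankMatrices n (a p.1 p.2)) (i : Fin r),
      (⨆ j, ((Pi.map fun p : Σ i, Fin (s i) => colSpan n (a p.1 p.2)) B ⟨i, j⟩).1)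
        = LinearMap.range (conc B i).mulVecLin := by
    intro B i
    rw [range_concatM]
    rfl
  -- existence of a groupwise-direct tuple mapping to any given coarse tuple
  have hsplit : ∀ v : ∀ i : Fin r, Gr (c i) n,
      ∃ B : ∀ p : Σ i, Fin (s i), FullRankMatrices n (a p.1 p.2),
        ∀ i, ∃ hr : (conc B i).rank = c i,
          colSpan n (c i) ⟨conc B i, hr⟩ = v i := by
    intro v
    choose C hC using fun i => exists_colSpan_eq (v i)
    refine ⟨fun p => ⟨blockM (σ p.1) (C p.1).1 p.2, rank_blockM (σ p.1) (C p.1).2 p.2⟩, ?_⟩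
    intro i
    have hcb : conc (fun p => (⟨blockM (σ p.1) (C p.1).1 p.2,
        rank_blockM (σ p.1) (C p.1).2 p.2⟩ : FullRankMatrices n (a p.1 p.2))) i
        = (C i).1 := concat_blockM (σ i) (C i).1
    rw [hcb]
    exact ⟨(C i).2, hC i⟩
  -- Step 1 : x is groupwise direct
  have hdir : ∀ i, Module.finrank ℂ ↥(⨆ j, (x ⟨i, j⟩).1) = c i := by
    set A₀ : Set (∀ p : Σ i, Fin (s i), Gr (a p.1 p.2) n) :=
      {z | ∀ i, Module.finrank ℂ ↥(⨆ j, (z ⟨i, j⟩).1) = c i} with hA₀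
    have hA₀pre : (Pi.map fun p : Σ i, Fin (s i) => colSpan n (a p.1 p.2)) ⁻¹' A₀ =
        ⋂ i, (fun B => conc B i) ⁻¹' {C : Matrix (Fin n) (Fin (c i)) ℂ | C.rank = c i} := by
      ext B
      simp only [hA₀, Set.mem_preimage, Set.mem_iInter, Set.mem_setOf_eq]
      refine forall_congr' fun i => ?_
      rw [hkey B i, Matrix.rank]
    have hA₀open : IsOpen A₀ := by
      rw [← hp.isQuotientMap.isOpen_preimage, hA₀pre]
      exact isOpen_iInter_of_finite fun i => isOpen_fullRank.preimage (hconc_cont i)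
    have hA₀ne : A₀.Nonempty := by
      obtain ⟨B, hB⟩ := hsplit (fun i => (nonempty_Gr (hgroup i)).some)
      refine ⟨(Pi.map fun p : Σ i, Fin (s i) => colSpan n (a p.1 p.2)) B, fun i => ?_⟩
      obtain ⟨hr, -⟩ := hB i
      rw [hkey B i, ← Matrix.rank, hr]
    obtain ⟨w, hwA₀, M, hMw⟩ := hx.inter_open_nonempty A₀ hA₀open hA₀ne
    intro i
    have hw : ∀ p, w p = glAction M (x p) := fun p => (congrFun hMw p).symm
    have h1 : Module.finrank ℂ ↥(⨆ j, (w ⟨i, j⟩).1) = c i := hwA₀ i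
    have h2 : (⨆ j, (w ⟨i, j⟩).1)
        = Submodule.map (glEquiv M).toLinearMap (⨆ j, (x ⟨i, j⟩).1) := by
      rw [Submodule.map_iSup]
      exact iSup_congr fun j => by rw [hw ⟨i, j⟩]; rfl
    rw [h2] at h1
    rwa [LinearEquiv.finrank_map_eq] at h1
  -- Step 2 : the candidate point downstairs
  set y : ∀ i : Fin r, Gr (c i) n := fun i => ⟨⨆ j, (x ⟨i, j⟩).1, hdir i⟩ with hy
  refine ⟨y, dense_iff_inter_open.mpr fun V hV hVne => ?_⟩
  obtain ⟨v, hv⟩ := hVne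
  -- the open set upstairs
  set A₁ : Set (∀ p : Σ i, Fin (s i), Gr (a p.1 p.2) n) :=
    {z | ∃ hz : ∀ i, Module.finrank ℂ ↥(⨆ j, (z ⟨i, j⟩).1) = c i,
      (fun i => (⟨⨆ j, (z ⟨i, j⟩).1, hz i⟩ : Gr (c i) n)) ∈ V} with hA₁
  -- the set of groupwise-direct matrix tuples
  set D : Set (∀ p : Σ i, Fin (s i), FullRankMatrices n (a p.1 p.2)) :=
    {B | ∀ i, (conc B i).rank = c i} with hD
  have hDopen : IsOpen D := by
    have : D = ⋂ i, (fun B => conc B i) ⁻¹'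
        {C : Matrix (Fin n) (Fin (c i)) ℂ | C.rank = c i} := by
      ext B
      simp [hD]
    rw [this]
    exact isOpen_iInter_of_finite fun i => isOpen_fullRank.preimage (hconc_cont i)
  let κ : D → ∀ i : Fin r, FullRankMatrices n (c i) := fun B i => ⟨conc B.1 i, B.2 i⟩
  have hκcont : Continuous κ := by
    apply continuous_pi
    intro i
    exact ((hconc_cont i).comp continuous_subtype_val).subtype_mk _
  have hA₁pre : (Pi.map fun p : Σ i, Fin (s i) => colSpan n (a p.1 p.2)) ⁻¹' A₁ =
      Subtype.val '' (κ ⁻¹' ((Pi.map fun i : Fin r => colSpan n (c i)) ⁻¹' V)) := by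
    ext B
    simp only [hA₁, Set.mem_preimage, Set.mem_setOf_eq, Set.mem_image]
    constructor
    · rintro ⟨hz, hmem⟩
      have hBD : B ∈ D := by
        intro i
        have := hz i
        rwa [hkey B i, ← Matrix.rank] at this
      refine ⟨⟨B, hBD⟩, ?_, rfl⟩
      show (Pi.map fun i : Fin r => colSpan n (c i)) (κ ⟨B, hBD⟩) ∈ V
      refine (congrArg (fun z => z ∈ V) ?_).mpr hmem
      funext i
      apply Subtype.ext
      exact (hkey B i).symm
    · rintro ⟨⟨B', hB'D⟩, hmem, rfl⟩
      replace hmem : (Pi.map fun i : Fin r => colSpan n (c i)) (κ ⟨B', hB'D⟩) ∈ V := hmem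
      refine ⟨fun i => by rw [hkey B' i, ← Matrix.rank]; exact hB'D i, ?_⟩
      refine (congrArg (fun z => z ∈ V) ?_).mpr hmem
      funext i
      apply Subtype.ext
      exact hkey B' i
  have hA₁open : IsOpen A₁ := by
    rw [← hp.isQuotientMap.isOpen_preimage, hA₁pre]
    exact hDopen.isOpenMap_subtype_val _ (hκcont.isOpen_preimage _ (hV.preimage hq.continuous))
  have hA₁ne : A₁.Nonempty := by
    obtain ⟨B, hB⟩ := hsplit v
    refine ⟨(Pi.map fun p : Σ i, Fin (s i) => colSpan n (a p.1 p.2)) B, ?_, ?_⟩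
    · intro i
      obtain ⟨hr, -⟩ := hB i
      rw [hkey B i, ← Matrix.rank, hr]
    · refine (congrArg (fun z => z ∈ V) ?_).mpr hv
      funext i
      obtain ⟨hr, hcs⟩ := hB i
      rw [← hcs]
      apply Subtype.ext
      exact hkey B i
  obtain ⟨w, hwA₁, M, hMw⟩ := hx.inter_open_nonempty A₁ hA₁open hA₁ne
  obtain ⟨hzw, hwV⟩ := hwA₁
  refine ⟨fun i => glAction M (y i), ?_, ⟨M, rfl⟩⟩
  refine (congrArg (fun z => z ∈ V) ?_).mpr hwV
  funext i
  apply Subtype.ext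
  show Submodule.map (glEquiv M).toLinearMap (⨆ j, (x ⟨i, j⟩).1) = ⨆ j, (w ⟨i, j⟩).1
  rw [Submodule.map_iSup]
  exact iSup_congr fun j => by rw [← congrFun hMw ⟨i, j⟩]; rfl

end Main

section Glue

def grCast {d d' : ℕ} (h : d = d') : Gr d n ≃ₜ Gr d' n := by
  subst h; exact Homeomorph.refl _

lemma grCast_action {d d' : ℕ} (h : d = d') (M : GL (Fin n) ℂ) (u : Gr d n) :
    grCast h (glAction M u) = glAction M (grCast h u) := by
  subst h; rfl

lemma DD_congr {ι ι' : Type} (f : ι → ℕ) (f' : ι' → ℕ) (e : ι' ≃ ι)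
    (hf : ∀ i', f' i' = f (e i')) (h : DD f n) : DD f' n := by
  obtain ⟨x, hx⟩ := h
  let φ : (∀ i', Gr (f' i') n) ≃ₜ (∀ i, Gr (f i) n) :=
    (Homeomorph.piCongrRight fun i' => grCast (hf i')).trans
      (Homeomorph.piCongrLeft (Y := fun i => Gr (f i) n) e)
  have hφact : ∀ (M : GL (Fin n) ℂ) (z : ∀ i', Gr (f' i') n),
      φ (fun i' => glAction M (z i')) = fun i => glAction M (φ z i) := by
    intro M z
    funext i
    obtain ⟨i', rfl⟩ := e.surjective i
    show (Equiv.piCongrLeft (fun i => Gr (f i) n) e)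
      (fun i' => grCast (hf i') (glAction M (z i'))) (e i') = _
    rw [Equiv.piCongrLeft_apply_apply]
    have : (φ z) (e i') = grCast (hf i') (z i') := by
      show (Equiv.piCongrLeft (fun i => Gr (f i) n) e)
        (fun i' => grCast (hf i') (z i')) (e i') = _
      rw [Equiv.piCongrLeft_apply_apply]
    rw [this, grCast_action]
  have hoqm : IsOpenQuotientMap φ := ⟨φ.surjective, φ.continuous, φ.isOpenMap⟩
  refine ⟨φ.symm x, ?_⟩
  rw [← hoqm.dense_preimage_iff] at hx
  convert hx using 1
  ext z
  simp only [Set.mem_setOf_eq, Set.mem_preimage]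
  constructor
  · rintro ⟨M, rfl⟩
    exact ⟨M, by rw [hφact M (φ.symm x)]; simp⟩
  · rintro ⟨M, hM⟩
    refine ⟨M, ?_⟩
    apply φ.injective
    rw [hφact M (φ.symm x)]
    simp only [Homeomorph.apply_symm_apply]
    exact hM

lemma exists_flatten_equiv : ∀ {r : ℕ} (g : Fin r → List ℕ),
    ∃ E : Fin ((List.ofFn g).flatten).length ≃ Σ i : Fin r, Fin ((g i).length),
      ∀ k, ((List.ofFn g).flatten).get k = ((g (E k).1).get (E k).2 : ℕ) := by
  intro r
  induction r with
  | zero =>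
    intro g
    have h0 : ((List.ofFn g).flatten).length = 0 := by simp
    refine ⟨(finCongr h0).trans (Equiv.equivOfIsEmpty _ _), fun k => ?_⟩
    exact (Fin.cast h0 k).elim0
  | succ r ih =>
    intro g
    set A := g 0 with hA
    set B := (List.ofFn fun i : Fin r => g i.succ).flatten with hB
    obtain ⟨E', hE'⟩ := ih (fun i => g i.succ)
    have hsplit : (List.ofFn g).flatten = A ++ B := by
      rw [List.ofFn_succ, List.flatten_cons]
    have hlen : ((List.ofFn g).flatten).length = A.length + B.length := by
      rw [hsplit, List.length_append]
    let e4 : (Fin A.length ⊕ Σ i : Fin r, Fin ((g i.succ).length))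
        ≃ Σ i : Fin (r + 1), Fin ((g i).length) :=
      { toFun := Sum.elim (fun j => ⟨0, j⟩) fun p => ⟨p.1.succ, p.2⟩
        invFun := fun p => Fin.cases (motive := fun i0 => Fin ((g i0).length) →
            (Fin A.length ⊕ Σ i : Fin r, Fin ((g i.succ).length)))
          (fun j => Sum.inl j) (fun i j => Sum.inr ⟨i, j⟩) p.1 p.2
        left_inv := by rintro (j | ⟨i, j⟩) <;> simp
        right_inv := by
          rintro ⟨i, j⟩
          induction i using Fin.cases <;> simp }
    refine ⟨(finCongr hlen).trans (finSumFinEquiv.symm.trans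
      ((Equiv.sumCongr (Equiv.refl _) E').trans e4)), fun k => ?_⟩
    rw [Equiv.trans_apply, Equiv.trans_apply, Equiv.trans_apply]
    rcases hu : finSumFinEquiv.symm (finCongr hlen k) with j | j
    · have hk : (k : ℕ) = (j : ℕ) := by
        have h2 : finCongr hlen k = finSumFinEquiv (Sum.inl j) := by
          rw [← hu, Equiv.apply_symm_apply]
        simpa using congrArg Fin.val h2
      show ((List.ofFn g).flatten).get k = (A.get j : ℕ)
      rw [List.get_of_eq hsplit, List.get_eq_getElem, List.get_eq_getElem]
      simp only [Fin.coe_cast, hk]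
      exact List.getElem_append_left j.2
    · have hk : (k : ℕ) = A.length + (j : ℕ) := by
        have h2 : finCongr hlen k = finSumFinEquiv (Sum.inr j) := by
          rw [← hu, Equiv.apply_symm_apply]
        simpa using congrArg Fin.val h2
      show ((List.ofFn g).flatten).get k = ((g (E' j).1.succ).get (E' j).2 : ℕ)
      rw [← hE' j, List.get_of_eq hsplit, List.get_eq_getElem, List.get_eq_getElem]
      simp only [Fin.coe_cast, hk]
      rw [List.getElem_append_right (by omega)]
      congr 1
      omega

end Glue

end Aux

/-- grouping entries. If the vector of group sums is sparse, so is
the original vector. -/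
theorem sparse_of_grouped_sparse (n r : ℕ) (s : Fin r → ℕ) (hs : ∀ i, 0 < s i)
    (a : ∀ i : Fin r, Fin (s i) → ℕ)
    (hgroup : ∀ i, ∑ j, a i j ≤ n)
    (hsparse : ¬ DenseDV (List.ofFn fun i => ∑ j, a i j) n) :
    ¬ DenseDV ((List.ofFn fun i => List.ofFn (a i)).flatten) n := by
  intro hd
  apply hsparse
  set l : List ℕ := (List.ofFn fun i => List.ofFn (a i)).flatten with hl
  have hDD : DD (fun k : Fin l.length => l.get k) n := hd
  obtain ⟨E, hE⟩ := exists_flatten_equiv (fun i => List.ofFn (a i))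
  let E2 : Fin l.length ≃ Σ i : Fin r, Fin (s i) :=
    E.trans (Equiv.sigmaCongrRight fun i => finCongr (List.length_ofFn (f := a i)))
  have hcompat : ∀ k : Fin l.length, l.get k = a (E2 k).1 ((E2 k).2) := by
    intro k
    rw [hE k, List.get_ofFn]
    rfl
  have hfine : DD (fun p : Σ i : Fin r, Fin (s i) => a p.1 p.2) n := by
    refine DD_congr (fun k : Fin l.length => l.get k) _ E2.symm ?_ hDD
    intro p
    have := hcompat (E2.symm p)
    rw [Equiv.apply_symm_apply] at this
    exact this.symm
  have hcoarse := DD_grouped a hgroup hfine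
  have : DD (fun k : Fin (List.ofFn fun i => ∑ j, a i j).length =>
      (List.ofFn fun i => ∑ j, a i j).get k) n := by
    refine DD_congr (fun i : Fin r => ∑ j, a i j) _
      (finCongr (List.length_ofFn (f := fun i => ∑ j, a i j))) ?_ hcoarse
    intro k
    rw [List.get_ofFn]
    rfl
  exact this
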